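/- On ℝ⁴ with coordinates (x,y,z,w), let k > 0 and consider the SU(2) frame X1(p) = k·(z, −w, −x, y), X2(p) = k·(w, z, −y, −x). Let f(x,y,z,w) = w. Then X1f = k·y and X2f = −k·x, so m := √((X1f)² + (X2f)²) = k·√(x²+y²), and at every point p = (x,y,z,w) with w = 0 and (x,y) ≠ (0,0), the mean-curvature expression vanishes: (X1(X1f) + X2(X2f))/m + (X1f)·X1(1/m) + (X2f)·X2(1/m) = 0 at p. -/

import Mathlib

noncomputable def Px : (ℝ × ℝ × ℝ × ℝ) →L[ℝ] ℝ :=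
  ContinuousLinearMap.fst ℝ ℝ (ℝ × ℝ × ℝ)

noncomputable def Py : (ℝ × ℝ × ℝ × ℝ) →L[ℝ] ℝ :=
  (ContinuousLinearMap.fst ℝ ℝ (ℝ × ℝ)).comp (ContinuousLinearMap.snd ℝ ℝ (ℝ × ℝ × ℝ))

noncomputable def Pw : (ℝ × ℝ × ℝ × ℝ) →L[ℝ] ℝ :=
  (ContinuousLinearMap.snd ℝ ℝ ℝ).comp
    ((ContinuousLinearMap.snd ℝ ℝ (ℝ × ℝ)).comp (ContinuousLinearMap.snd ℝ ℝ (ℝ × ℝ × ℝ)))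

lemma hasFDerivAt_w (q : ℝ × ℝ × ℝ × ℝ) :
    HasFDerivAt (fun q : ℝ × ℝ × ℝ × ℝ => q.2.2.2) Pw q := Pw.hasFDerivAt

lemma hasFDerivAt_ky (q : ℝ × ℝ × ℝ × ℝ) (k : ℝ) :
    HasFDerivAt (fun q : ℝ × ℝ × ℝ × ℝ => k * q.2.1) (k • Py) q :=
  Py.hasFDerivAt.const_mul k

lemma hasFDerivAt_nkx (q : ℝ × ℝ × ℝ × ℝ) (k : ℝ) :
    HasFDerivAt (fun q : ℝ × ℝ × ℝ × ℝ => -(k * q.1)) (-(k • Px)) q :=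
  (Px.hasFDerivAt.const_mul k).neg

lemma hasFDerivAt_sq_aux {E : Type*} [NormedAddCommGroup E] [NormedSpace ℝ E]
    {c : E → ℝ} {c' : E →L[ℝ] ℝ} {x : E} (h : HasFDerivAt c c' x) :
    HasFDerivAt (fun y => c y ^ 2) ((2 * c x) • c') x := by
  have h2 := h.mul h
  have : c x • c' + c x • c' = (2 * c x) • c' := by
    rw [two_mul, add_smul]
  rw [this] at h2
  simpa [pow_two, Pi.mul_def] using h2

/-- for the `SU(2)` frame `X1 = k(z,−w,−x,y)`, `X2 = k(w,z,−y,−x)` and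
the defining function `f = w` of the model surface, one has `X1f = k·y`,
`X2f = −k·x`, `m = √((X1f)² + (X2f)²) = k√(x²+y²)`, and at every point with `w = 0`
and `(x,y) ≠ (0,0)` the sub-Riemannian mean-curvature expression vanishes. -/
theorem su2_model_surface_mean_curvature_zero
    (k : ℝ) (hk : 0 < k)
    (X1 X2 : ℝ × ℝ × ℝ × ℝ → ℝ × ℝ × ℝ × ℝ)
    (hX1 : X1 = fun p => (k * p.2.2.1, -(k * p.2.2.2), -(k * p.1), k * p.2.1))
    (hX2 : X2 = fun p => (k * p.2.2.2, k * p.2.2.1, -(k * p.2.1), -(k * p.1)))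
    (f : ℝ × ℝ × ℝ × ℝ → ℝ) (hf : f = fun p => p.2.2.2)
    (X1f X2f m : ℝ × ℝ × ℝ × ℝ → ℝ)
    (hX1f : X1f = fun q => fderiv ℝ f q (X1 q))
    (hX2f : X2f = fun q => fderiv ℝ f q (X2 q))
    (hm : m = fun q => Real.sqrt ((X1f q) ^ 2 + (X2f q) ^ 2)) :
    (∀ p : ℝ × ℝ × ℝ × ℝ,
      X1f p = k * p.2.1 ∧ X2f p = -(k * p.1) ∧
      m p = k * Real.sqrt (p.1 ^ 2 + p.2.1 ^ 2)) ∧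
    (∀ p : ℝ × ℝ × ℝ × ℝ, p.2.2.2 = 0 → (p.1, p.2.1) ≠ ((0 : ℝ), (0 : ℝ)) →
      (fderiv ℝ X1f p (X1 p) + fderiv ℝ X2f p (X2 p)) / m p
          + X1f p * fderiv ℝ (fun q => 1 / m q) p (X1 p)
          + X2f p * fderiv ℝ (fun q => 1 / m q) p (X2 p) = 0) := by
  have hfd : ∀ q : ℝ × ℝ × ℝ × ℝ, fderiv ℝ f q = Pw := by
    intro q; rw [hf]; exact (hasFDerivAt_w q).fderiv
  have hX1f' : X1f = fun q : ℝ × ℝ × ℝ × ℝ => k * q.2.1 := by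
    funext q
    rw [hX1f]
    show (fderiv ℝ f q) (X1 q) = k * q.2.1
    rw [hfd q, hX1]
    simp [Pw]
  have hX2f' : X2f = fun q : ℝ × ℝ × ℝ × ℝ => -(k * q.1) := by
    funext q
    rw [hX2f]
    show (fderiv ℝ f q) (X2 q) = -(k * q.1)
    rw [hfd q, hX2]
    simp [Pw]
  have hm' : ∀ q : ℝ × ℝ × ℝ × ℝ, m q = k * Real.sqrt (q.1 ^ 2 + q.2.1 ^ 2) := by
    intro q
    simp only [hm, hX1f', hX2f']
    have h : (k * q.2.1) ^ 2 + (-(k * q.1)) ^ 2 = k ^ 2 * (q.1 ^ 2 + q.2.1 ^ 2) := by ring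
    rw [h, Real.sqrt_mul (by positivity), Real.sqrt_sq hk.le]
  constructor
  · intro p
    exact ⟨by rw [hX1f'], by rw [hX2f'], hm' p⟩
  · intro p hw hxy
    have hd1 : fderiv ℝ X1f p = k • Py := by
      rw [hX1f']; exact (hasFDerivAt_ky p k).fderiv
    have hd2 : fderiv ℝ X2f p = -(k • Px) := by
      rw [hX2f']; exact (hasFDerivAt_nkx p k).fderiv
    set g : ℝ × ℝ × ℝ × ℝ → ℝ := fun q => (k * q.2.1) ^ 2 + (-(k * q.1)) ^ 2 with hgdef
    have hgp : 0 < g p := by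
      have hx : p.1 ≠ 0 ∨ p.2.1 ≠ 0 := by
        by_contra hc
        push_neg at hc
        exact hxy (by simp [hc.1, hc.2])
      rcases hx with hx | hy
      · have h1 : 0 < (k * p.1) ^ 2 := by positivity
        simp only [hgdef]; nlinarith [sq_nonneg (k * p.2.1)]
      · have h1 : 0 < (k * p.2.1) ^ 2 := by positivity
        simp only [hgdef]; nlinarith [sq_nonneg (k * p.1)]
    have hG : HasFDerivAt g
        ((2 * (k * p.2.1)) • (k • Py) + (2 * (-(k * p.1))) • (-(k • Px))) p :=
      (hasFDerivAt_sq_aux (hasFDerivAt_ky p k)).add (hasFDerivAt_sq_aux (hasFDerivAt_nkx p k))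
    have hsqrt_ne : Real.sqrt (g p) ≠ 0 := by
      positivity
    have hinv : HasDerivAt (fun t => (Real.sqrt t)⁻¹)
        (-(1 / (2 * Real.sqrt (g p))) / (Real.sqrt (g p)) ^ 2) (g p) :=
      (Real.hasDerivAt_sqrt (ne_of_gt hgp)).inv hsqrt_ne
    have hcomp : HasFDerivAt (fun q => (Real.sqrt (g q))⁻¹)
        ((-(1 / (2 * Real.sqrt (g p))) / (Real.sqrt (g p)) ^ 2) •
          ((2 * (k * p.2.1)) • (k • Py) + (2 * (-(k * p.1))) • (-(k • Px)))) p :=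
      hinv.comp_hasFDerivAt p hG
    have hfun : (fun q => 1 / m q) = fun q => (Real.sqrt (g q))⁻¹ := by
      funext q
      simp only [hm, hX1f', hX2f', one_div, hgdef]
    have hdm : fderiv ℝ (fun q => 1 / m q) p =
        ((-(1 / (2 * Real.sqrt (g p))) / (Real.sqrt (g p)) ^ 2) •
          ((2 * (k * p.2.1)) • (k • Py) + (2 * (-(k * p.1))) • (-(k • Px)))) := by
      rw [hfun]; exact hcomp.fderiv
    rw [hd1, hd2, hdm]
    simp only [hX1f', hX2f', hX1, hX2, ContinuousLinearMap.smul_apply,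
      ContinuousLinearMap.add_apply, ContinuousLinearMap.neg_apply, smul_eq_mul, Px, Py,
      ContinuousLinearMap.coe_comp', Function.comp_apply,
      ContinuousLinearMap.coe_fst', ContinuousLinearMap.coe_snd']
    rw [hw]
    ring
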